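/- arXiv:1612.06408 — 2 statements merged into one kernel-verified Lean document; each statement's English description precedes it below -/
import Mathlib

section
/- Let λ > 0, 0 < p < 1 and let n ≥ 1 be an integer. Then ∫₀^∞ e^{-t} · ( ∑_{j=n}^∞ e^{-λt}(1-e^{-λt})^{j-1} · C(j,n) p^n (1-p)^{j-n} ) dt = (p^n/λ) · (Γ(n)Γ(1+1/λ)/Γ(n+1+1/λ)) · ∑_{k=0}^∞ ((n+1)_k (n)_k / (n+1+1/λ)_k) · (1-p)^k / k!, where C(j,n) is the binomial coefficient, Γ is the Gamma function, and (a)_k = a(a+1)⋯(a+k-1) is the Pochhammer symbol. (The right-hand side equals (p^n/λ) B(n, 1+1/λ) ₂F₁(n+1, n; n+1+1/λ; 1-p); this is the probability that exactly n individuals survive the collapse in the Yule growth with binomial catastrophe scheme.) -/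
open MeasureTheory Real

section YuleAux
open Set

lemma yb_integrable (c l : ℝ) (hc : 0 < c) (hl : 0 < l) (m : ℕ) :
    IntegrableOn (fun t => Real.exp (-(c*t)) * (1 - Real.exp (-(l*t)))^m) (Set.Ioi 0) := by
  have hg : IntegrableOn (fun t : ℝ => Real.exp (-(c*t))) (Set.Ioi 0) := by
    simpa [neg_mul] using exp_neg_integrableOn_Ioi 0 hc
  apply Integrable.mono' hg (Measurable.aestronglyMeasurable (by
    exact ((Real.measurable_exp.comp ((measurable_const.mul measurable_id).neg)).mul
      (((measurable_const.sub (Real.measurable_exp.comp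
        ((measurable_const.mul measurable_id).neg)))).pow_const m))))
  filter_upwards [ae_restrict_mem measurableSet_Ioi] with t ht
  rw [norm_mul, norm_pow, Real.norm_of_nonneg (Real.exp_pos _).le]
  have h1 : Real.exp (-(l*t)) ≤ 1 := Real.exp_le_one_iff.mpr (by nlinarith [mem_Ioi.mp ht])
  have h2 : 0 < Real.exp (-(l*t)) := Real.exp_pos _
  calc Real.exp (-(c*t)) * ‖1 - Real.exp (-(l*t))‖^m
      ≤ Real.exp (-(c*t)) * 1^m := by
        gcongr
        rw [Real.norm_of_nonneg (by linarith)]; linarith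
    _ = Real.exp (-(c*t)) := by ring

lemma yb_integral (l : ℝ) (hl : 0 < l) : ∀ (m : ℕ) (c : ℝ), 0 < c →
    ∫ t in Set.Ioi (0:ℝ), Real.exp (-(c*t)) * (1 - Real.exp (-(l*t)))^m
      = (m.factorial : ℝ) * l^m / ∏ i ∈ Finset.range (m+1), (c + i * l) := by
  intro m
  induction m with
  | zero =>
    intro c hc
    simp only [pow_zero, mul_one, Nat.factorial_zero, Nat.cast_one]
    rw [show (fun t : ℝ => Real.exp (-(c*t))) = fun t => Real.exp (-(t*c)) from
      funext (fun t => by ring_nf)]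
    rw [integral_comp_mul_right_Ioi (fun x => Real.exp (-x)) 0 hc]
    simp [integral_exp_neg_Ioi, integral_exp_Iic_zero]
  | succ m ih =>
    intro c hc
    have key : ∀ t : ℝ, Real.exp (-(c*t)) * (1 - Real.exp (-(l*t)))^(m+1)
        = Real.exp (-(c*t)) * (1 - Real.exp (-(l*t)))^m
          - Real.exp (-((c+l)*t)) * (1 - Real.exp (-(l*t)))^m := by
      intro t
      have he : Real.exp (-((c+l)*t)) = Real.exp (-(c*t)) * Real.exp (-(l*t)) := by
        rw [← Real.exp_add]; ring_nf
      rw [he, pow_succ]; ring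
    simp_rw [key]
    rw [integral_sub (yb_integrable c l hc hl m) (yb_integrable (c+l) l (by linarith) hl m),
      ih c hc, ih (c+l) (by linarith)]
    have hB : ∏ i ∈ Finset.range (m+1), (c + l + i * l)
        = ∏ i ∈ Finset.range (m+1), (c + (i+1) * l) := by
      apply Finset.prod_congr rfl; intro i _; push_cast; ring
    have h2 : ∏ i ∈ Finset.range (m+2), (c + i * l)
        = (∏ i ∈ Finset.range (m+1), (c + (i+1) * l)) * c := by
      rw [Finset.prod_range_succ' (fun i : ℕ => c + (i:ℝ) * l) (m+1)]
      congr 1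
      · apply Finset.prod_congr rfl; intro i _; push_cast; ring
      · norm_num
    have h1 : ∏ i ∈ Finset.range (m+2), (c + i * l)
        = (∏ i ∈ Finset.range (m+1), (c + i * l)) * (c + (m+1) * l) := by
      rw [Finset.prod_range_succ]; push_cast; ring
    have hApos : 0 < ∏ i ∈ Finset.range (m+1), ((c:ℝ) + i * l) :=
      Finset.prod_pos (fun i _ => by positivity)
    have hBpos : 0 < ∏ i ∈ Finset.range (m+1), ((c:ℝ) + (i+1) * l) :=
      Finset.prod_pos (fun i _ => by positivity)
    rw [hB]
    set A := ∏ i ∈ Finset.range (m+1), ((c:ℝ) + i * l) with hA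
    set B := ∏ i ∈ Finset.range (m+1), ((c:ℝ) + (i+1) * l) with hBdef
    have hrel : B * c = A * (c + (m+1) * l) := by rw [← h2, h1]
    have hgoal : ∏ i ∈ Finset.range (m+1+1), ((c:ℝ) + i * l) = B * c := h2
    rw [hgoal, Nat.factorial_succ]
    have hc' : c ≠ 0 := hc.ne'
    rw [div_sub_div _ _ hApos.ne' hBpos.ne', div_eq_div_iff (by positivity) (by positivity)]
    push_cast
    linear_combination ((m.factorial : ℝ) * l^m * B) * hrel


lemma yb_Gamma_add_nat {x : ℝ} (hx : 0 < x) (m : ℕ) :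
    Real.Gamma (x + m) = Real.Gamma x * ∏ i ∈ Finset.range m, (x + i) := by
  induction m with
  | zero => simp
  | succ m ih =>
    have h : x + ((m:ℝ) + 1) = (x + m) + 1 := by ring
    push_cast
    rw [h, Real.Gamma_add_one (by positivity), ih, Finset.prod_range_succ]
    ring

lemma yb_ascPoch (x : ℝ) (k : ℕ) :
    (ascPochhammer ℝ k).eval x = ∏ i ∈ Finset.range k, (x + i) := by
  induction k with
  | zero => simp
  | succ k ih => rw [ascPochhammer_succ_eval, ih, Finset.prod_range_succ]

lemma yb_fact_prod (n : ℕ) (hn : 1 ≤ n) (k : ℕ) :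
    ((n-1).factorial : ℝ) * ∏ i ∈ Finset.range k, ((n:ℝ) + i)
      = ((k + n - 1).factorial : ℝ) := by
  induction k with
  | zero => simp
  | succ k ih =>
    rw [Finset.prod_range_succ, ← mul_assoc, ih]
    have h1 : k + 1 + n - 1 = (k + n - 1) + 1 := by omega
    have h2 : ((k + n - 1 : ℕ) : ℝ) + 1 = (n : ℝ) + k := by
      push_cast [Nat.cast_sub (by omega : 1 ≤ k + n)]; ring
    rw [h1, Nat.factorial_succ, Nat.cast_mul, ← h2]; push_cast; ring

lemma yb_fact_prod' (n k : ℕ) :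
    (∏ i ∈ Finset.range k, ((n:ℝ) + 1 + i)) * (n.factorial : ℝ)
      = ((k + n).factorial : ℝ) := by
  induction k with
  | zero => simp
  | succ k ih =>
    rw [Finset.prod_range_succ, mul_right_comm, ih,
      show k + 1 + n = (k + n) + 1 from by omega, Nat.factorial_succ]
    push_cast; ring

lemma yb_choose_prod (n k : ℕ) :
    ∏ i ∈ Finset.range k, ((n:ℝ) + 1 + i) = ((k + n).choose n : ℝ) * (k.factorial : ℝ) := by
  have h := Nat.choose_mul_factorial_mul_factorial (Nat.le_add_left n k)
  rw [Nat.add_sub_cancel] at h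
  have h2 := yb_fact_prod' n k
  have hne : (n.factorial : ℝ) ≠ 0 := by exact_mod_cast n.factorial_ne_zero
  apply mul_right_cancel₀ hne
  rw [h2, ← h]; push_cast; ring

lemma yb_termwise (l p : ℝ) (hl : 0 < l) (n k : ℕ) (hn : 1 ≤ n) :
    (((k+n).choose n : ℝ) * p^n * (1-p)^k) *
      (((k+n-1).factorial : ℝ) * l^(k+n-1) / ∏ i ∈ Finset.range (k+n), (1 + l + (i:ℝ) * l))
    = (p ^ n / l) * (Real.Gamma n * Real.Gamma (1 + 1/l) / Real.Gamma ((n:ℝ) + 1 + 1/l)) *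
      (((ascPochhammer ℝ k).eval ((n:ℝ)+1) * (ascPochhammer ℝ k).eval (n:ℝ) /
        (ascPochhammer ℝ k).eval ((n:ℝ)+1+1/l)) * (1-p)^k / (k.factorial)) := by
  have hl' : l ≠ 0 := hl.ne'
  set a : ℝ := 1/l with ha_def
  have ha : 0 < a := by positivity
  have hQl : ∏ i ∈ Finset.range (k+n), (1 + l + (i:ℝ) * l)
      = l^(k+n) * ∏ i ∈ Finset.range (k+n), (1 + a + (i:ℝ)) := by
    rw [show l^(k+n) = ∏ _i ∈ Finset.range (k+n), l from by
      rw [Finset.prod_const, Finset.card_range], ← Finset.prod_mul_distrib]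
    apply Finset.prod_congr rfl; intro i _
    rw [ha_def]; field_simp; ring
  have hGam1 : Real.Gamma (n:ℝ) = ((n-1).factorial : ℝ) := by
    rw [show (n:ℝ) = ((n-1 : ℕ):ℝ) + 1 from by push_cast [Nat.cast_sub hn]; ring]
    exact Real.Gamma_nat_eq_factorial (n-1)
  have hGam2 : Real.Gamma ((n:ℝ)+1+a) = Real.Gamma (1+a) * ∏ i ∈ Finset.range n, (1+a+(i:ℝ)) := by
    rw [show (n:ℝ)+1+a = (1+a) + (n:ℕ) from by push_cast; ring]
    exact yb_Gamma_add_nat (by positivity) n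
  have hsplit : (∏ i ∈ Finset.range n, (1+a+(i:ℝ))) * (∏ i ∈ Finset.range k, ((n:ℝ)+1+a+(i:ℝ)))
      = ∏ i ∈ Finset.range (k+n), (1+a+(i:ℝ)) := by
    rw [show k+n = n+k from add_comm k n, Finset.prod_range_add (fun i : ℕ => 1+a+(i:ℝ)) n k]
    congr 1
    apply Finset.prod_congr rfl; intro i _; push_cast; ring
  have hpoch1 : (ascPochhammer ℝ k).eval ((n:ℝ)+1) = ((k + n).choose n : ℝ) * (k.factorial : ℝ) := by
    rw [yb_ascPoch, ← yb_choose_prod n k]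
  have hpoch2 : (ascPochhammer ℝ k).eval ((n:ℝ)) = ∏ i ∈ Finset.range k, ((n:ℝ) + i) :=
    yb_ascPoch _ k
  have hpoch3 : (ascPochhammer ℝ k).eval ((n:ℝ)+1+a) = ∏ i ∈ Finset.range k, ((n:ℝ)+1+a+(i:ℝ)) := by
    rw [yb_ascPoch]
  have hfac : ((k+n-1).factorial : ℝ) = ((n-1).factorial : ℝ) * ∏ i ∈ Finset.range k, ((n:ℝ) + i) :=
    (yb_fact_prod n hn k).symm
  have hGpos : 0 < Real.Gamma (1+a) := Real.Gamma_pos_of_pos (by positivity)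
  have hQn : 0 < ∏ i ∈ Finset.range n, (1+a+(i:ℝ)) := Finset.prod_pos (fun i _ => by positivity)
  have hCk : 0 < ∏ i ∈ Finset.range k, ((n:ℝ)+1+a+(i:ℝ)) := Finset.prod_pos (fun i _ => by positivity)
  have hB : 0 ≤ ∏ i ∈ Finset.range k, ((n:ℝ)+(i:ℝ)) := Finset.prod_nonneg (fun i _ => by positivity)
  have hkf : (k.factorial : ℝ) ≠ 0 := by exact_mod_cast k.factorial_ne_zero
  have hpow : l^(k+n) = l^(k+n-1) * l := by
    rw [← pow_succ, show k+n-1+1 = k+n from by omega]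
  rw [hGam1, hGam2, hpoch1, hpoch2, hpoch3, hfac, hQl, ← hsplit, hpow]
  field_simp

end YuleAux

open Set in
/-- Probability that exactly `n ≥ 1` individuals survive the collapse in the Yule
growth (rate `l`) with binomial catastrophe (parameter `p`) scheme:
`(pⁿ/λ)·B(n,1+1/λ)·₂F₁(n+1,n;n+1+1/λ;1-p)`, with the Beta function written as a
quotient of Gamma functions and the hypergeometric function as a Pochhammer series.
The sum over `j ≥ n` is written by reindexing `j = k + n`. -/
theorem yule_binomial_n_survivors (l p : ℝ) (hl : 0 < l) (hp0 : 0 < p) (hp1 : p < 1)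
    (n : ℕ) (hn : 1 ≤ n) :
    ∫ t in Set.Ioi (0:ℝ), Real.exp (-t) *
      ∑' k : ℕ, Real.exp (-(l * t)) * (1 - Real.exp (-(l * t))) ^ (k + n - 1) *
        ((k + n).choose n : ℝ) * p ^ n * (1 - p) ^ k
      = (p ^ n / l) *
        (Real.Gamma n * Real.Gamma (1 + 1 / l) / Real.Gamma (n + 1 + 1 / l)) *
        ∑' k : ℕ, ((ascPochhammer ℝ k).eval ((n : ℝ) + 1) *
            (ascPochhammer ℝ k).eval (n : ℝ) /
            (ascPochhammer ℝ k).eval ((n : ℝ) + 1 + 1 / l)) *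
          (1 - p) ^ k / (Nat.factorial k) := by
  have hc : (0:ℝ) < 1 + l := by linarith
  set F : ℕ → ℝ → ℝ := fun k t =>
    (((k+n).choose n : ℝ) * p^n * (1-p)^k) *
      (Real.exp (-((1+l)*t)) * (1 - Real.exp (-(l*t)))^(k+n-1)) with hF
  have hpt : ∀ t : ℝ, Real.exp (-t) *
      ∑' k : ℕ, Real.exp (-(l * t)) * (1 - Real.exp (-(l * t))) ^ (k + n - 1) *
        ((k + n).choose n : ℝ) * p ^ n * (1 - p) ^ k = ∑' k, F k t := by
    intro t
    rw [← tsum_mul_left]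
    apply tsum_congr; intro k
    have he : Real.exp (-((1+l)*t)) = Real.exp (-t) * Real.exp (-(l*t)) := by
      rw [← Real.exp_add]; ring_nf
    rw [hF]; simp only []; rw [he]; ring
  have hInt : ∀ k : ℕ, Integrable (F k) (volume.restrict (Set.Ioi (0:ℝ))) := fun k =>
    (yb_integrable (1+l) l hc hl (k+n-1)).const_mul _
  have hbase : ∫ t in Set.Ioi (0:ℝ), Real.exp (-((1+l)*t)) = 1/(1+l) := by
    have h := yb_integral l hl 0 (1+l) hc
    simpa using h
  have hconst_nonneg : ∀ k : ℕ, (0:ℝ) ≤ ((k+n).choose n : ℝ) * p^n * (1-p)^k := by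
    intro k
    have h1p : (0:ℝ) ≤ 1 - p := by linarith
    positivity
  have hSum : Summable (fun k : ℕ => ∫ t in Set.Ioi (0:ℝ), ‖F k t‖) := by
    have hgsum : Summable (fun k : ℕ => (((k+n).choose n : ℝ) * p^n * (1-p)^k) * (1/(1+l))) := by
      have hs : Summable (fun k : ℕ => ((k+n).choose n : ℝ) * (1-p)^k) :=
        summable_choose_mul_geometric_of_norm_lt_one n
          (by rw [Real.norm_eq_abs, abs_of_pos (by linarith)]; linarith)
      apply Summable.congr ((hs.mul_right (p^n * (1/(1+l)))))
      intro k; ring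
    refine Summable.of_nonneg_of_le
      (fun k => integral_nonneg (fun t => norm_nonneg _)) ?_ hgsum
    · intro k
      have heq : ∀ t : ℝ, ‖F k t‖ = (((k+n).choose n : ℝ) * p^n * (1-p)^k) *
          ‖Real.exp (-((1+l)*t)) * (1 - Real.exp (-(l*t)))^(k+n-1)‖ := by
        intro t
        rw [hF]; simp only []
        rw [norm_mul, Real.norm_of_nonneg (hconst_nonneg k)]
      simp_rw [heq]
      rw [MeasureTheory.integral_const_mul]
      apply mul_le_mul_of_nonneg_left _ (hconst_nonneg k)
      rw [← hbase]
      apply integral_mono_ae ((yb_integrable (1+l) l hc hl (k+n-1)).norm)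
        (by simpa using (yb_integrable (1+l) l hc hl 0).integrable)
      filter_upwards [ae_restrict_mem measurableSet_Ioi] with t ht
      rw [norm_mul, norm_pow, Real.norm_of_nonneg (Real.exp_pos _).le]
      have h1 : Real.exp (-(l*t)) ≤ 1 := Real.exp_le_one_iff.mpr (by nlinarith [mem_Ioi.mp ht])
      calc Real.exp (-((1+l)*t)) * ‖1 - Real.exp (-(l*t))‖^(k+n-1)
          ≤ Real.exp (-((1+l)*t)) * 1^(k+n-1) := by
            gcongr
            rw [Real.norm_of_nonneg (by linarith [Real.exp_pos (-(l*t))])]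
            linarith [Real.exp_pos (-(l*t))]
        _ = Real.exp (-((1+l)*t)) := by ring
  calc ∫ t in Set.Ioi (0:ℝ), Real.exp (-t) *
      ∑' k : ℕ, Real.exp (-(l * t)) * (1 - Real.exp (-(l * t))) ^ (k + n - 1) *
        ((k + n).choose n : ℝ) * p ^ n * (1 - p) ^ k
      = ∫ t in Set.Ioi (0:ℝ), ∑' k, F k t := by
        apply integral_congr_ae
        exact Filter.Eventually.of_forall hpt
    _ = ∑' k, ∫ t in Set.Ioi (0:ℝ), F k t :=
        (integral_tsum_of_summable_integral_norm hInt hSum).symm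
    _ = ∑' k : ℕ, (p ^ n / l) *
        (Real.Gamma n * Real.Gamma (1 + 1 / l) / Real.Gamma ((n:ℝ) + 1 + 1 / l)) *
        (((ascPochhammer ℝ k).eval ((n : ℝ) + 1) * (ascPochhammer ℝ k).eval (n : ℝ) /
            (ascPochhammer ℝ k).eval ((n : ℝ) + 1 + 1 / l)) *
          (1 - p) ^ k / (Nat.factorial k)) := by
        apply tsum_congr; intro k
        rw [hF]; simp only []
        rw [MeasureTheory.integral_const_mul]
        have hi := yb_integral l hl (k+n-1) (1+l) hc
        rw [show k+n-1+1 = k+n from by omega] at hi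
        rw [hi]
        exact yb_termwise l p hl n k hn
    _ = (p ^ n / l) *
        (Real.Gamma n * Real.Gamma (1 + 1 / l) / Real.Gamma ((n:ℝ) + 1 + 1 / l)) *
        ∑' k : ℕ, ((ascPochhammer ℝ k).eval ((n : ℝ) + 1) *
            (ascPochhammer ℝ k).eval (n : ℝ) /
            (ascPochhammer ℝ k).eval ((n : ℝ) + 1 + 1 / l)) *
          (1 - p) ^ k / (Nat.factorial k) := tsum_mul_left
end

section
/- Let λ > 0, 0 < p ≤ 1 and let d ≥ 2 be an integer. Let E = ∑_{n=0}^∞ (d/(d+1))^n ∫₀^∞ e^{-t} ( ∑_{k=max(n,1)}^∞ e^{-λt}(1-e^{-λt})^{k-1} C(k,n) p^n (1-p)^{k-n} ) dt, i.e. E = E[(d/(d+1))^N] for the Yule growth with binomial catastrophe survivor distribution. Then E < (d-1)/d if and only if ∑_{k=0}^∞ k! ((d+1-p)/(d+1))^k / ((2+1/λ)_k) < (d²-1)(λ+1)/(d(d+1-p)). -/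
open MeasureTheory Real Set Filter Finset

lemma yb_Ppos {c : ℝ} (hc : 0 < c) (j : ℕ) : 0 < (ascPochhammer ℝ j).eval c := by
  induction j with
  | zero => simp [ascPochhammer_zero]
  | succ n ih =>
    rw [ascPochhammer_succ_eval]
    exact mul_pos ih (by positivity)

lemma yb_pmf_le_one {p : ℝ} (h0 : 0 ≤ p) (h1 : p ≤ 1) {n k : ℕ} (h : n ≤ k) :
    (k.choose n : ℝ) * p ^ n * (1 - p) ^ (k - n) ≤ 1 := by
  have h1p : (0:ℝ) ≤ 1 - p := by linarith
  have key : ∑ i ∈ Finset.range (k+1), p ^ i * (1-p) ^ (k-i) * (k.choose i : ℝ) = 1 := by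
    rw [← add_pow]; simp
  calc (k.choose n : ℝ) * p ^ n * (1-p) ^ (k-n)
      = p ^ n * (1-p) ^ (k-n) * (k.choose n : ℝ) := by ring
    _ ≤ ∑ i ∈ Finset.range (k+1), p ^ i * (1-p) ^ (k-i) * (k.choose i : ℝ) :=
        Finset.single_le_sum (f := fun i => p ^ i * (1-p) ^ (k-i) * (k.choose i : ℝ))
          (fun i _ => mul_nonneg (mul_nonneg (pow_nonneg h0 _) (pow_nonneg h1p _))
            (Nat.cast_nonneg _)) (Finset.mem_range.2 (by omega))
    _ = 1 := key

lemma yb_summable_choose {x : ℝ} (h0 : 0 ≤ x) (h1 : x < 1) (n : ℕ) :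
    Summable (fun k => (k.choose n : ℝ) * x ^ (k - n)) := by
  rcases h0.eq_or_lt with rfl | hx
  · apply summable_of_ne_finset_zero (s := Finset.range (n+1))
    intro k hk
    rw [zero_pow (by simp at hk; omega), mul_zero]
  · have hsum : Summable (fun k : ℕ => (x ^ n)⁻¹ * ((k : ℝ) ^ n * x ^ k)) :=
      (summable_pow_mul_geometric_of_norm_lt_one (R := ℝ) n
        (by rwa [Real.norm_eq_abs, abs_of_pos hx])).mul_left _
    refine Summable.of_nonneg_of_le (fun k => by positivity) (fun k => ?_) hsum
    have hc : (k.choose n : ℝ) ≤ (k : ℝ) ^ n := by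
      exact_mod_cast Nat.choose_le_pow k n
    have hx' : x ^ (k - n) ≤ (x ^ n)⁻¹ * x ^ k := by
      rcases le_or_gt n k with h | h
      · rw [pow_sub₀ x (ne_of_gt hx) h, mul_comm]
      · have hkn : k - n = 0 := by omega
        rw [hkn, pow_zero, inv_mul_eq_div, le_div_iff₀ (pow_pos hx n), one_mul]
        exact pow_le_pow_of_le_one h0 h1.le h.le
    calc (k.choose n : ℝ) * x ^ (k - n) ≤ (k : ℝ) ^ n * ((x ^ n)⁻¹ * x ^ k) :=
          mul_le_mul hc hx' (by positivity) (by positivity)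
      _ = (x ^ n)⁻¹ * ((k : ℝ) ^ n * x ^ k) := by ring

noncomputable def yb_B (l : ℝ) (j : ℕ) : ℝ :=
  ∫ t in Set.Ioi (0:ℝ), Real.exp (-t) * (Real.exp (-(l*t)) * (1 - Real.exp (-(l*t))) ^ j)

noncomputable def yb_G (l : ℝ) (j : ℕ) : ℝ :=
  ∫ t in Set.Ioi (0:ℝ), Real.exp (-t) * (1 - Real.exp (-(l*t))) ^ j

lemma yb_cont_q (l : ℝ) : Continuous (fun t : ℝ => Real.exp (-(l*t))) :=
  Real.continuous_exp.comp (continuous_const.mul continuous_id).neg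

lemma yb_q_bounds {l : ℝ} (hl : 0 < l) {t : ℝ} (ht : 0 < t) :
    0 < Real.exp (-(l*t)) ∧ Real.exp (-(l*t)) ≤ 1 ∧
      0 ≤ 1 - Real.exp (-(l*t)) ∧ 1 - Real.exp (-(l*t)) ≤ 1 := by
  have h1 : Real.exp (-(l*t)) ≤ 1 := by
    rw [Real.exp_le_one_iff]
    nlinarith
  exact ⟨Real.exp_pos _, h1, by linarith, by linarith [Real.exp_pos (-(l*t))]⟩

lemma yb_integrableOn_exp_mul {g : ℝ → ℝ} (hg : Continuous g)
    (hb : ∀ t ∈ Set.Ioi (0:ℝ), |g t| ≤ 1) :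
    IntegrableOn (fun t => Real.exp (-t) * g t) (Set.Ioi (0:ℝ)) := by
  have h1 : IntegrableOn (fun x : ℝ => Real.exp (-1 * x)) (Set.Ioi (0:ℝ)) :=
    exp_neg_integrableOn_Ioi 0 one_pos
  refine Integrable.mono h1 ?_ ?_
  · exact ((Real.continuous_exp.comp continuous_neg).mul hg).aestronglyMeasurable
  · filter_upwards [ae_restrict_mem measurableSet_Ioi] with t ht
    rw [Real.norm_eq_abs, Real.norm_eq_abs, abs_mul, abs_of_pos (Real.exp_pos _)]
    have : |Real.exp (-1 * t)| = Real.exp (-t) := by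
      rw [abs_of_pos (Real.exp_pos _)]; norm_num
    rw [this]
    calc Real.exp (-t) * |g t| ≤ Real.exp (-t) * 1 :=
          mul_le_mul_of_nonneg_left (hb t ht) (Real.exp_pos _).le
      _ = Real.exp (-t) := mul_one _

lemma yb_intB {l : ℝ} (hl : 0 < l) (j : ℕ) :
    IntegrableOn (fun t => Real.exp (-t) * (Real.exp (-(l*t)) * (1 - Real.exp (-(l*t))) ^ j))
      (Set.Ioi (0:ℝ)) := by
  refine yb_integrableOn_exp_mul ((yb_cont_q l).mul ((continuous_const.sub (yb_cont_q l)).pow j)) ?_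
  intro t ht
  obtain ⟨h0, h1, h2, h3⟩ := yb_q_bounds hl ht
  rw [abs_of_nonneg (by positivity)]
  calc Real.exp (-(l*t)) * (1 - Real.exp (-(l*t))) ^ j ≤ 1 * 1 ^ j := by
        exact mul_le_mul h1 (pow_le_pow_left₀ h2 h3 j) (by positivity) (by norm_num)
    _ = 1 := by norm_num

lemma yb_intG {l : ℝ} (hl : 0 < l) (j : ℕ) :
    IntegrableOn (fun t => Real.exp (-t) * (1 - Real.exp (-(l*t))) ^ j) (Set.Ioi (0:ℝ)) := by
  refine yb_integrableOn_exp_mul ((continuous_const.sub (yb_cont_q l)).pow j) ?_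
  intro t ht
  obtain ⟨h0, h1, h2, h3⟩ := yb_q_bounds hl ht
  rw [abs_of_nonneg (by positivity)]
  calc (1 - Real.exp (-(l*t))) ^ j ≤ 1 ^ j := pow_le_pow_left₀ h2 h3 j
    _ = 1 := one_pow _

lemma yb_G_zero {l : ℝ} : yb_G l 0 = 1 := by
  simp only [yb_G, pow_zero, mul_one]
  exact integral_exp_neg_Ioi_zero

lemma yb_B_nonneg {l : ℝ} (hl : 0 < l) (j : ℕ) : 0 ≤ yb_B l j := by
  apply setIntegral_nonneg measurableSet_Ioi
  intro t ht
  have ht' : 0 < t := Set.mem_Ioi.mp ht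
  obtain ⟨h0, h1, h2, h3⟩ := yb_q_bounds hl ht'
  positivity

lemma yb_B_le_one {l : ℝ} (hl : 0 < l) (j : ℕ) : yb_B l j ≤ 1 := by
  have hmaj : IntegrableOn (fun t : ℝ => Real.exp (-t)) (Set.Ioi (0:ℝ)) := by
    have := exp_neg_integrableOn_Ioi (0:ℝ) one_pos
    simpa [neg_one_mul] using this
  have h := integral_mono_ae (yb_intB hl j) hmaj ?_
  · calc yb_B l j ≤ ∫ t in Set.Ioi (0:ℝ), Real.exp (-t) := h
      _ = 1 := integral_exp_neg_Ioi_zero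
  · filter_upwards [ae_restrict_mem measurableSet_Ioi] with t ht
    obtain ⟨h0, h1, h2, h3⟩ := yb_q_bounds hl ht
    calc Real.exp (-t) * (Real.exp (-(l*t)) * (1 - Real.exp (-(l*t))) ^ j)
        ≤ Real.exp (-t) * (1 * 1 ^ j) := by
          exact mul_le_mul_of_nonneg_left
            (mul_le_mul h1 (pow_le_pow_left₀ h2 h3 j) (by positivity) (by norm_num))
            (Real.exp_pos _).le
      _ = Real.exp (-t) := by norm_num

lemma yb_ftc {l : ℝ} (hl : 0 < l) (j : ℕ) :
    yb_G l (j+1) = ((j:ℝ)+1) * l * yb_B l j := by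
  set f : ℝ → ℝ := fun t => Real.exp (-t) * (1 - Real.exp (-(l*t))) ^ (j+1) with hf
  set f' : ℝ → ℝ := fun t => -(Real.exp (-t) * (1 - Real.exp (-(l*t))) ^ (j+1)) +
      (((j:ℝ)+1) * l) * (Real.exp (-t) * (Real.exp (-(l*t)) * (1 - Real.exp (-(l*t))) ^ j))
    with hf'
  have hderiv : ∀ x ∈ Set.Ici (0:ℝ), HasDerivAt f (f' x) x := by
    intro x _
    have h1 : HasDerivAt (fun t : ℝ => Real.exp (-t)) (Real.exp (-x) * (-1)) x :=
      (hasDerivAt_id x).neg.exp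
    have hin : HasDerivAt (fun t : ℝ => 1 - Real.exp (-(l*t)))
        (-(Real.exp (-(l*x)) * (-l))) x := by
      have hdin : HasDerivAt (fun t : ℝ => -(l*t)) (-l) x := by
        simpa [Pi.neg_def] using ((hasDerivAt_id x).const_mul l).neg
      exact (hdin.exp).const_sub 1
    have h2 := hin.fun_pow (j+1)
    simp only [Nat.add_sub_cancel] at h2
    refine HasDerivAt.congr_deriv (h1.fun_mul h2) ?_
    simp only [hf']
    push_cast
    ring
  have f'int : IntegrableOn f' (Set.Ioi (0:ℝ)) := by
    exact ((yb_intG hl (j+1)).neg).add ((yb_intB hl j).const_mul _)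
  have hlim : Tendsto f atTop (nhds 0) := by
    have hq : Tendsto (fun t : ℝ => Real.exp (-(l*t))) atTop (nhds 0) := by
      apply Real.tendsto_exp_atBot.comp
      exact tendsto_neg_atTop_atBot.comp (Tendsto.const_mul_atTop hl tendsto_id)
    have h2 : Tendsto (fun t : ℝ => (1 - Real.exp (-(l*t))) ^ (j+1)) atTop
        (nhds ((1 - 0) ^ (j+1))) := (tendsto_const_nhds.sub hq).pow (j+1)
    have h1 : Tendsto (fun t : ℝ => Real.exp (-t)) atTop (nhds 0) := by
      apply Real.tendsto_exp_atBot.comp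
      exact tendsto_neg_atTop_atBot
    have := h1.mul h2
    simpa using this
  have key := integral_Ioi_of_hasDerivAt_of_tendsto' hderiv f'int hlim
  have hf0 : f 0 = 0 := by simp [hf]
  rw [hf0, sub_zero] at key
  have e1 : IntegrableOn
      (fun t : ℝ => -(Real.exp (-t) * (1 - Real.exp (-(l*t))) ^ (j+1))) (Set.Ioi (0:ℝ)) := by
    exact (yb_intG hl (j+1)).neg'
  have e2 : IntegrableOn (fun t : ℝ => (((j:ℝ)+1) * l) *
      (Real.exp (-t) * (Real.exp (-(l*t)) * (1 - Real.exp (-(l*t))) ^ j))) (Set.Ioi (0:ℝ)) :=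
    (yb_intB hl j).const_mul _
  have split : ∫ x in Set.Ioi (0:ℝ), f' x =
      -(yb_G l (j+1)) + (((j:ℝ)+1) * l) * yb_B l j := by
    rw [hf']
    rw [integral_add e1 e2, integral_neg, integral_const_mul]
    rfl
  rw [split] at key
  linarith [key]

lemma yb_GB {l : ℝ} (hl : 0 < l) (j : ℕ) : yb_G l (j+1) = yb_G l j - yb_B l j := by
  have hfun : (fun t : ℝ => Real.exp (-t) * (1 - Real.exp (-(l*t))) ^ (j+1)) =
      fun t : ℝ => Real.exp (-t) * (1 - Real.exp (-(l*t))) ^ j -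
        Real.exp (-t) * (Real.exp (-(l*t)) * (1 - Real.exp (-(l*t))) ^ j) := by
    funext t; ring
  rw [yb_G, hfun, integral_sub (yb_intG hl j) (yb_intB hl j)]
  rfl

lemma yb_BofG {l : ℝ} (hl : 0 < l) (j : ℕ) :
    yb_B l j = yb_G l j / (1 + l * ((j:ℝ)+1)) := by
  have h1 := yb_ftc hl j
  have h2 := yb_GB hl j
  have hpos : 0 < 1 + l * ((j:ℝ)+1) := by positivity
  field_simp
  nlinarith [h1, h2]

lemma yb_Gval {l : ℝ} (hl : 0 < l) (j : ℕ) :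
    yb_G l j = (1 + l * ((j:ℝ)+1)) *
      ((j.factorial : ℝ) / ((l+1) * (ascPochhammer ℝ j).eval (2 + 1/l))) := by
  induction j with
  | zero =>
    rw [yb_G_zero]
    simp [ascPochhammer_zero]
    field_simp
    ring
  | succ n ih =>
    have hP := yb_Ppos (c := 2 + 1/l) (by positivity) n
    have hpos : 0 < 1 + l * ((n:ℝ)+1) := by positivity
    have hB : yb_B l n = (n.factorial : ℝ) / ((l+1) * (ascPochhammer ℝ n).eval (2 + 1/l)) := by
      rw [yb_BofG hl n, ih, mul_div_cancel_left₀ _ (ne_of_gt hpos)]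
    rw [yb_ftc hl n, hB, ascPochhammer_succ_eval, Nat.factorial_succ]
    have h0 : l ≠ 0 := hl.ne'
    have hPne : Polynomial.eval (2 + 1/l) (ascPochhammer ℝ n) ≠ 0 := ne_of_gt hP
    have h1 : l + 1 ≠ 0 := by positivity
    have hq : 1 + l * ((n:ℝ)+2) ≠ 0 := by positivity
    push_cast
    rw [show (2 + 1/l + (n:ℝ)) = (1 + l*((n:ℝ)+2))/l by field_simp; ring]
    set P := Polynomial.eval (2 + 1/l) (ascPochhammer ℝ n) with hPdef
    field_simp
    ring

lemma yb_Bval {l : ℝ} (hl : 0 < l) (j : ℕ) :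
    yb_B l j = (j.factorial : ℝ) / ((l+1) * (ascPochhammer ℝ j).eval (2 + 1/l)) := by
  have hpos : 0 < 1 + l * ((j:ℝ)+1) := by positivity
  rw [yb_BofG hl j, yb_Gval hl j, mul_div_cancel_left₀ _ (ne_of_gt hpos)]

noncomputable def ybF (l p : ℝ) (n k : ℕ) (t : ℝ) : ℝ :=
  if max n 1 ≤ k then
    Real.exp (-(l * t)) * (1 - Real.exp (-(l * t))) ^ (k - 1) *
      (k.choose n : ℝ) * p ^ n * (1 - p) ^ (k - n)
  else 0

lemma yb_int_exp : IntegrableOn (fun t : ℝ => Real.exp (-t)) (Set.Ioi (0:ℝ)) := by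
  have := exp_neg_integrableOn_Ioi (0:ℝ) one_pos
  simpa [neg_one_mul] using this

section perN

variable {l p : ℝ} (hl : 0 < l) (hp0 : 0 < p) (hp1 : p ≤ 1)

lemma ybF_cont (n k : ℕ) : Continuous (fun t : ℝ => ybF l p n k t) := by
  unfold ybF
  by_cases h : max n 1 ≤ k
  · simp only [if_pos h]
    exact ((((yb_cont_q l).mul ((continuous_const.sub (yb_cont_q l)).pow _)).mul
      continuous_const).mul continuous_const).mul continuous_const
  · simp only [if_neg h]; exact continuous_const

include hl hp0 hp1 in
lemma ybF_nonneg (n k : ℕ) {t : ℝ} (ht : 0 < t) : 0 ≤ ybF l p n k t := by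
  unfold ybF
  by_cases h : max n 1 ≤ k
  · rw [if_pos h]
    obtain ⟨h0, h1, h2, h3⟩ := yb_q_bounds hl ht
    have h1p : (0:ℝ) ≤ 1 - p := by linarith
    exact mul_nonneg (mul_nonneg (mul_nonneg (mul_nonneg h0.le (pow_nonneg h2 _))
      (Nat.cast_nonneg _)) (pow_nonneg hp0.le _)) (pow_nonneg h1p _)
  · rw [if_neg h]

include hl hp0 hp1 in
lemma ybF_le_one (n k : ℕ) {t : ℝ} (ht : 0 < t) : ybF l p n k t ≤ 1 := by
  unfold ybF
  by_cases h : max n 1 ≤ k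
  · rw [if_pos h]
    obtain ⟨h0, h1, h2, h3⟩ := yb_q_bounds hl ht
    have h1p : (0:ℝ) ≤ 1 - p := by linarith
    have hnk : n ≤ k := le_trans (le_max_left n 1) h
    have hpmf := yb_pmf_le_one hp0.le hp1 hnk
    have e1 : (1 - Real.exp (-(l*t))) ^ (k-1) ≤ 1 := pow_le_one₀ h2 h3
    have e2 : (0:ℝ) ≤ (k.choose n : ℝ) * p ^ n * (1-p) ^ (k-n) :=
      mul_nonneg (mul_nonneg (Nat.cast_nonneg _) (pow_nonneg hp0.le _)) (pow_nonneg h1p _)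
    calc Real.exp (-(l*t)) * (1 - Real.exp (-(l*t))) ^ (k-1) * (k.choose n:ℝ) * p^n * (1-p)^(k-n)
        = (Real.exp (-(l*t)) * (1 - Real.exp (-(l*t))) ^ (k-1)) *
            ((k.choose n:ℝ) * p^n * (1-p)^(k-n)) := by ring
      _ ≤ 1 * 1 := mul_le_mul (mul_le_one₀ h1 (pow_nonneg h2 _) e1) hpmf e2 one_pos.le
      _ = 1 := by norm_num
  · rw [if_neg h]; norm_num

include hl hp0 hp1 in
lemma ybF_le (n k : ℕ) {t : ℝ} (ht : 0 < t) :
    ybF l p n k t ≤ (k.choose n : ℝ) * (1-p) ^ (k-n) := by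
  have h1p : (0:ℝ) ≤ 1 - p := by linarith
  unfold ybF
  by_cases h : max n 1 ≤ k
  · rw [if_pos h]
    obtain ⟨h0, h1, h2, h3⟩ := yb_q_bounds hl ht
    have e1 : (1 - Real.exp (-(l*t))) ^ (k-1) ≤ 1 := pow_le_one₀ h2 h3
    calc Real.exp (-(l*t)) * (1 - Real.exp (-(l*t))) ^ (k-1) * (k.choose n:ℝ) * p^n * (1-p)^(k-n)
        = (Real.exp (-(l*t)) * (1 - Real.exp (-(l*t))) ^ (k-1) * p^n) *
            ((k.choose n:ℝ) * (1-p)^(k-n)) := by ring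
      _ ≤ 1 * ((k.choose n:ℝ) * (1-p)^(k-n)) := by
          apply mul_le_mul_of_nonneg_right _ (mul_nonneg (Nat.cast_nonneg _) (pow_nonneg h1p _))
          exact mul_le_one₀ (mul_le_one₀ h1 (pow_nonneg h2 _) e1) (pow_nonneg hp0.le _)
            (pow_le_one₀ hp0.le hp1)
      _ = _ := one_mul _
  · rw [if_neg h]
    positivity

include hl hp0 hp1 in
lemma ybFF_int (n k : ℕ) :
    IntegrableOn (fun t => Real.exp (-t) * ybF l p n k t) (Set.Ioi (0:ℝ)) := by
  refine yb_integrableOn_exp_mul (ybF_cont n k) ?_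
  intro t ht
  rw [abs_of_nonneg (ybF_nonneg hl hp0 hp1 n k ht)]
  exact ybF_le_one hl hp0 hp1 n k ht

include hl in
lemma ybFF_val (n k : ℕ) :
    (∫ t in Set.Ioi (0:ℝ), Real.exp (-t) * ybF l p n k t) =
      (if max n 1 ≤ k then (k.choose n : ℝ) * p ^ n * (1-p) ^ (k-n) * yb_B l (k-1) else 0) := by
  by_cases h : max n 1 ≤ k
  · rw [if_pos h]
    have hfun : (fun t => Real.exp (-t) * ybF l p n k t) =
        fun t => ((k.choose n : ℝ) * p ^ n * (1-p) ^ (k-n)) *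
          (Real.exp (-t) * (Real.exp (-(l*t)) * (1 - Real.exp (-(l*t))) ^ (k-1))) := by
      funext t
      unfold ybF
      rw [if_pos h]
      ring
    rw [hfun, integral_const_mul]
    rfl
  · have hfun : (fun t => Real.exp (-t) * ybF l p n k t) = fun _ => (0:ℝ) := by
      funext t; unfold ybF; rw [if_neg h, mul_zero]
    rw [if_neg h, hfun]
    simp

include hl hp0 hp1 in
lemma yb_term (n : ℕ) :
    (∫ t in Set.Ioi (0:ℝ), Real.exp (-t) * ∑' k : ℕ, ybF l p n k t) =
      ∑' k : ℕ, (if max n 1 ≤ k then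
        (k.choose n : ℝ) * p ^ n * (1-p) ^ (k-n) * yb_B l (k-1) else 0) := by
  have h1p : (0:ℝ) ≤ 1 - p := by linarith
  have hp1' : 1 - p < 1 := by linarith
  have hMsum : Summable (fun k => (k.choose n : ℝ) * (1-p) ^ (k-n)) :=
    yb_summable_choose h1p hp1' n
  have hnorm : Summable (fun k : ℕ =>
      ∫ t in Set.Ioi (0:ℝ), ‖Real.exp (-t) * ybF l p n k t‖) := by
    refine Summable.of_nonneg_of_le
      (fun k => integral_nonneg (fun t => norm_nonneg _)) (fun k => ?_) hMsum
    have hval : (∫ t in Set.Ioi (0:ℝ), ‖Real.exp (-t) * ybF l p n k t‖) =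
        ∫ t in Set.Ioi (0:ℝ), Real.exp (-t) * ybF l p n k t := by
      apply integral_congr_ae
      filter_upwards [ae_restrict_mem measurableSet_Ioi] with t ht
      rw [Real.norm_eq_abs, abs_of_nonneg
        (mul_nonneg (Real.exp_pos _).le (ybF_nonneg hl hp0 hp1 n k ht))]
    rw [hval]
    have hmaj : IntegrableOn
        (fun t : ℝ => ((k.choose n : ℝ) * (1-p) ^ (k-n)) * Real.exp (-t))
        (Set.Ioi (0:ℝ)) := yb_int_exp.const_mul _
    have hmono := integral_mono_ae (ybFF_int hl hp0 hp1 n k) hmaj ?_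
    · calc (∫ t in Set.Ioi (0:ℝ), Real.exp (-t) * ybF l p n k t)
          ≤ ∫ t in Set.Ioi (0:ℝ), ((k.choose n : ℝ) * (1-p) ^ (k-n)) * Real.exp (-t) := hmono
        _ = (k.choose n : ℝ) * (1-p) ^ (k-n) := by
            rw [integral_const_mul, integral_exp_neg_Ioi_zero, mul_one]
    · filter_upwards [ae_restrict_mem measurableSet_Ioi] with t ht
      calc Real.exp (-t) * ybF l p n k t
          ≤ Real.exp (-t) * ((k.choose n : ℝ) * (1-p) ^ (k-n)) :=
            mul_le_mul_of_nonneg_left (ybF_le hl hp0 hp1 n k ht) (Real.exp_pos _).le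
        _ = ((k.choose n : ℝ) * (1-p) ^ (k-n)) * Real.exp (-t) := by ring
  calc (∫ t in Set.Ioi (0:ℝ), Real.exp (-t) * ∑' k : ℕ, ybF l p n k t)
      = ∫ t in Set.Ioi (0:ℝ), ∑' k : ℕ, Real.exp (-t) * ybF l p n k t := by
        apply integral_congr_ae
        exact Filter.Eventually.of_forall (fun t => tsum_mul_left.symm)
    _ = ∑' k : ℕ, ∫ t in Set.Ioi (0:ℝ), Real.exp (-t) * ybF l p n k t :=
        (integral_tsum_of_summable_integral_norm (fun k => ybFF_int hl hp0 hp1 n k) hnorm).symm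
    _ = _ := tsum_congr (fun k => ybFF_val hl n k)

end perN

set_option maxHeartbeats 1000000 in
/-- Corollary 3.3 (ii): for the Yule growth (rate `l`) with binomial catastrophe
(parameter `p`) survivor distribution, `E[(d/(d+1))^N] < (d-1)/d` (the survival
condition on the tree `T^d`) if and only if
`₂F₁(1,1;2+1/λ;(d(1-p)+1)/(d+1)) < (d²-1)(λ+1)/(d(d+1-p))`, with the hypergeometric
function written as the Pochhammer series at `x = (d+1-p)/(d+1)`. -/
theorem yule_binomial_survival_condition (l p : ℝ) (hl : 0 < l)
    (hp0 : 0 < p) (hp1 : p ≤ 1) (d : ℕ) (hd : 2 ≤ d) :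
    (∑' n : ℕ, ((d : ℝ) / (d + 1)) ^ n *
        ∫ t in Set.Ioi (0:ℝ), Real.exp (-t) *
          ∑' k : ℕ, (if max n 1 ≤ k then
            Real.exp (-(l * t)) * (1 - Real.exp (-(l * t))) ^ (k - 1) *
              (k.choose n : ℝ) * p ^ n * (1 - p) ^ (k - n)
            else 0)
        < ((d : ℝ) - 1) / d)
      ↔ ∑' k : ℕ, (Nat.factorial k : ℝ) * (((d : ℝ) + 1 - p) / (d + 1)) ^ k /
          (ascPochhammer ℝ k).eval (2 + 1 / l)
        < ((d : ℝ) ^ 2 - 1) * (l + 1) / ((d : ℝ) * ((d : ℝ) + 1 - p)) := by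
  have hd2 : (2:ℝ) ≤ (d:ℝ) := by exact_mod_cast hd
  have hdpos : (0:ℝ) < d := by linarith
  have hd1 : (0:ℝ) < (d:ℝ) + 1 := by linarith
  have h1p : (0:ℝ) ≤ 1 - p := by linarith
  set s : ℝ := (d:ℝ) / ((d:ℝ) + 1) with hs
  have hs0 : 0 < s := div_pos hdpos hd1
  have hs1 : s < 1 := (div_lt_one hd1).2 (by linarith)
  set r : ℝ := p * s + (1 - p) with hrdef
  have hr0 : 0 < r := by nlinarith
  have hr1 : r < 1 := by nlinarith
  have hrval : r = ((d:ℝ) + 1 - p) / ((d:ℝ) + 1) := by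
    rw [hrdef, hs]; field_simp; ring
  have hl1 : (0:ℝ) < l + 1 := by linarith
  have hPpos : ∀ j : ℕ, 0 < (ascPochhammer ℝ j).eval (2 + 1/l) :=
    fun j => yb_Ppos (by positivity) j
  -- the double-indexed summand after integration
  set U : ℕ → ℕ → ℝ := fun n k => s ^ n *
      (if max n 1 ≤ k then (k.choose n : ℝ) * p ^ n * (1-p) ^ (k-n) * yb_B l (k-1) else 0)
    with hU
  have hUnn : ∀ n k : ℕ, 0 ≤ U n k := by
    intro n k
    simp only [hU]
    by_cases h : max n 1 ≤ k
    · rw [if_pos h]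
      have := yb_B_nonneg hl (k-1)
      positivity
    · rw [if_neg h, mul_zero]
  have hsum_n : ∀ k : ℕ, Summable (fun n => U n k) := by
    intro k
    apply summable_of_ne_finset_zero (s := Finset.range (k+1))
    intro n hn
    have hnk : ¬ (max n 1 ≤ k) := by
      simp only [Finset.mem_range, not_lt] at hn
      simp only [max_le_iff, not_and]
      omega
    simp only [hU, if_neg hnk, mul_zero]
  have hsum_k : ∀ n : ℕ, Summable (fun k => U n k) := by
    intro n
    refine Summable.of_nonneg_of_le (fun k => hUnn n k) (fun k => ?_)
      (yb_summable_choose h1p (by linarith) n)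
    simp only [hU]
    by_cases h : max n 1 ≤ k
    · rw [if_pos h]
      have hB0 := yb_B_nonneg hl (k-1)
      have hB1 := yb_B_le_one hl (k-1)
      have e1 : s ^ n ≤ 1 := pow_le_one₀ hs0.le hs1.le
      have e2 : p ^ n ≤ 1 := pow_le_one₀ hp0.le hp1
      calc s ^ n * ((k.choose n : ℝ) * p ^ n * (1-p) ^ (k-n) * yb_B l (k-1))
          = (s ^ n * p ^ n * yb_B l (k-1)) * ((k.choose n : ℝ) * (1-p) ^ (k-n)) := by ring
        _ ≤ 1 * ((k.choose n : ℝ) * (1-p) ^ (k-n)) := by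
            apply mul_le_mul_of_nonneg_right _
              (mul_nonneg (Nat.cast_nonneg _) (pow_nonneg h1p _))
            exact mul_le_one₀ (mul_le_one₀ e1 (pow_nonneg hp0.le _) e2) hB0 hB1
        _ = _ := one_mul _
    · rw [if_neg h, mul_zero]
      positivity
  have hW : ∀ k : ℕ, (∑' n, U n k) = (if 1 ≤ k then r ^ k * yb_B l (k-1) else 0) := by
    intro k
    rcases Nat.eq_zero_or_pos k with rfl | hk
    · have hz : ∀ n : ℕ, U n 0 = 0 := by
        intro n
        simp only [hU]
        have : ¬ (max n 1 ≤ 0) := by simp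
        rw [if_neg this, mul_zero]
      simp [hz]
    · have hk1 : 1 ≤ k := hk
      rw [if_pos hk1]
      rw [tsum_eq_sum (s := Finset.range (k+1)) ?_]
      · have hbin : ((p*s) + (1-p)) ^ k =
            ∑ i ∈ Finset.range (k+1), (p*s)^i * (1-p)^(k-i) * (k.choose i : ℝ) :=
          add_pow _ _ _
        rw [show r ^ k * yb_B l (k-1) =
            (∑ i ∈ Finset.range (k+1), (p*s)^i * (1-p)^(k-i) * (k.choose i : ℝ)) *
              yb_B l (k-1) by rw [← hbin, hrdef]]
        rw [Finset.sum_mul]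
        apply Finset.sum_congr rfl
        intro n hn
        have hnk : n ≤ k := by
          simp only [Finset.mem_range] at hn; omega
        have hmax : max n 1 ≤ k := max_le hnk hk
        simp only [hU, if_pos hmax]
        rw [mul_pow]
        ring
      · intro n hn
        have hnk : ¬ (max n 1 ≤ k) := by
          simp only [Finset.mem_range, not_lt] at hn
          simp only [max_le_iff, not_and]
          omega
        simp only [hU, if_neg hnk, mul_zero]
  have hWsum : Summable (fun k : ℕ => if 1 ≤ k then r ^ k * yb_B l (k-1) else 0) := by
    refine Summable.of_nonneg_of_le (fun k => ?_) (fun k => ?_)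
      (summable_geometric_of_lt_one hr0.le hr1)
    · by_cases h : 1 ≤ k
      · rw [if_pos h]
        exact mul_nonneg (pow_nonneg hr0.le _) (yb_B_nonneg hl _)
      · rw [if_neg h]
    · by_cases h : 1 ≤ k
      · rw [if_pos h]
        calc r ^ k * yb_B l (k-1) ≤ r ^ k * 1 :=
              mul_le_mul_of_nonneg_left (yb_B_le_one hl _) (pow_nonneg hr0.le _)
          _ = r ^ k := mul_one _
      · rw [if_neg h]
        positivity
  have hUsum : Summable (Function.uncurry (fun k n => U n k)) := by
    refine (summable_prod_of_nonneg ?_).2 ⟨fun k => hsum_n k, ?_⟩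
    · intro q
      exact hUnn q.2 q.1
    · apply Summable.congr hWsum
      intro k
      exact (hW k).symm
  have hswap : ∑' n, ∑' k, U n k = ∑' k, ∑' n, U n k :=
    Summable.tsum_comm' hUsum hsum_n hsum_k
  have hshift : Summable (fun j : ℕ => if 1 ≤ j+1 then r ^ (j+1) * yb_B l ((j+1)-1) else 0) :=
    (summable_nat_add_iff 1).2 hWsum
  -- the main evaluation
  have hE : (∑' n : ℕ, s ^ n *
        ∫ t in Set.Ioi (0:ℝ), Real.exp (-t) *
          ∑' k : ℕ, (if max n 1 ≤ k then
            Real.exp (-(l * t)) * (1 - Real.exp (-(l * t))) ^ (k - 1) *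
              (k.choose n : ℝ) * p ^ n * (1 - p) ^ (k - n)
            else 0)) =
      (r / (l+1)) * ∑' j : ℕ, (Nat.factorial j : ℝ) * r ^ j /
        (ascPochhammer ℝ j).eval (2 + 1/l) := by
    calc (∑' n : ℕ, s ^ n *
        ∫ t in Set.Ioi (0:ℝ), Real.exp (-t) *
          ∑' k : ℕ, (if max n 1 ≤ k then
            Real.exp (-(l * t)) * (1 - Real.exp (-(l * t))) ^ (k - 1) *
              (k.choose n : ℝ) * p ^ n * (1 - p) ^ (k - n)
            else 0))
        = ∑' n : ℕ, s ^ n * ∫ t in Set.Ioi (0:ℝ), Real.exp (-t) * ∑' k : ℕ, ybF l p n k t := by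
          simp only [ybF]
      _ = ∑' n : ℕ, ∑' k : ℕ, U n k := by
          apply tsum_congr
          intro n
          rw [yb_term hl hp0 hp1 n]
          exact tsum_mul_left.symm
      _ = ∑' k : ℕ, ∑' n : ℕ, U n k := hswap
      _ = ∑' k : ℕ, (if 1 ≤ k then r ^ k * yb_B l (k-1) else 0) := tsum_congr hW
      _ = (if 1 ≤ 0 then r ^ 0 * yb_B l (0-1) else 0) +
          ∑' j : ℕ, (if 1 ≤ j+1 then r ^ (j+1) * yb_B l ((j+1)-1) else 0) :=
          tsum_eq_zero_add' hshift
      _ = ∑' j : ℕ, r ^ (j+1) * yb_B l j := by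
          norm_num
      _ = ∑' j : ℕ, (r / (l+1)) * ((Nat.factorial j : ℝ) * r ^ j /
            (ascPochhammer ℝ j).eval (2 + 1/l)) := by
          apply tsum_congr
          intro j
          rw [yb_Bval hl j, pow_succ]
          have hP := (hPpos j).ne'
          field_simp
      _ = _ := tsum_mul_left
  rw [hE]
  simp only [← hrval]
  rw [mul_comm (r / (l+1))]
  rw [← lt_div_iff₀ (div_pos hr0 hl1)]
  have hdp : (0:ℝ) < (d:ℝ) + 1 - p := by linarith
  have hfinal : (((d:ℝ) - 1) / d) / (r / (l+1)) =
      ((d:ℝ) ^ 2 - 1) * (l + 1) / ((d:ℝ) * ((d:ℝ) + 1 - p)) := by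
    rw [hrval]
    field_simp
    ring
  rw [hfinal]
end
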